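/- Let ≻ be a monomial (term) order on monomials of K[x₁,…,xₙ] and let F be a finite set of nonzero polynomials. Then there exists a weight vector ω ∈ ℚⁿ with all coordinates nonnegative such that for every f ∈ F, the exponent of the ≻-leading monomial of f is the unique exponent in the support of f maximizing α ↦ ⟨ω, α⟩. -/

import Mathlib

lemma exists_sep {F : Type*} [Field F] [LinearOrder F] [IsStrictOrderedRing F] (A B : Finset F)
    (h : ∀ a ∈ A, ∀ b ∈ B, a < b) :
    ∃ t : F, (∀ a ∈ A, a < t) ∧ (∀ b ∈ B, t < b) := by
  rcases A.eq_empty_or_nonempty with hA | hA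
  · rcases B.eq_empty_or_nonempty with hB | hB
    · exact ⟨0, by simp [hA], by simp [hB]⟩
    · refine ⟨B.min' hB - 1, by simp [hA], fun b hb => ?_⟩
      have := B.min'_le b hb; linarith
  · rcases B.eq_empty_or_nonempty with hB | hB
    · refine ⟨A.max' hA + 1, fun a ha => ?_, by simp [hB]⟩
      have := A.le_max' a ha; linarith
    · have hlt : A.max' hA < B.min' hB := h _ (A.max'_mem hA) _ (B.min'_mem hB)
      obtain ⟨t, ht1, ht2⟩ := exists_between hlt
      exact ⟨t, fun a ha => lt_of_le_of_lt (A.le_max' a ha) ht1,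
        fun b hb => lt_of_lt_of_le ht2 (B.min'_le b hb)⟩

lemma sum_dite_univ {ι : Type*} {M : Type*} [Fintype ι] [AddCommMonoid M]
    (p : ι → Prop) [DecidablePred p] (f : ∀ i, p i → M) :
    (∑ i, if h : p i then f i h else 0) = ∑ x : {i // p i}, f x.1 x.2 := by
  rw [← Finset.sum_filter_add_sum_filter_not Finset.univ p]
  have h2 : ∑ x ∈ Finset.filter (fun x => ¬ p x) Finset.univ,
      (if h : p x then f x h else 0) = 0 :=
    Finset.sum_eq_zero (fun x hx => dif_neg (Finset.mem_filter.mp hx).2)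
  rw [h2, add_zero,
    Finset.sum_subtype (p := p) (Finset.filter p Finset.univ) (by simp)
      (fun i => if h : p i then f i h else 0)]
  exact Finset.sum_congr rfl (fun x _ => dif_pos x.2)

theorem gordan {F : Type*} [Field F] [LinearOrder F] [IsStrictOrderedRing F] :
    ∀ (n : ℕ) (ι : Type) [Fintype ι] (v : ι → Fin n → F),
      (∃ ω : Fin n → F, ∀ i, 0 < ∑ j, v i j * ω j) ∨
      (∃ c : ι → F, (∀ i, 0 ≤ c i) ∧ (∃ i, c i ≠ 0) ∧
        ∀ j, ∑ i, c i * v i j = 0) := by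
  intro n
  induction n with
  | zero =>
    intro ι _ v
    by_cases h : Nonempty ι
    · refine Or.inr ⟨fun _ => 1, fun _ => zero_le_one, ⟨Classical.arbitrary ι, one_ne_zero⟩,
        fun j => j.elim0⟩
    · exact Or.inl ⟨fun j => 0, fun i => (h ⟨i⟩).elim⟩
  | succ n IH =>
    intro ι _ v
    classical
    set lst := Fin.last n with hlst
    rcases IH (({i : ι // v i lst = 0}) ⊕ (({i : ι // 0 < v i lst}) × ({i : ι // v i lst < 0})))
        (fun x => match x with
          | .inl z => fun j => v z.1 j.castSucc
          | .inr (p, q) => fun j =>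
              (-(v q.1 lst)) * v p.1 j.castSucc + (v p.1 lst) * v q.1 j.castSucc)
      with ⟨ω', hω'⟩ | ⟨c', hc'1, ⟨i₀, hi₀⟩, hc'3⟩
    · -- build ω from ω' and a new last coordinate t
      set Sv : ι → F := fun i => ∑ j : Fin n, v i j.castSucc * ω' j with hSv
      have hz : ∀ i, v i lst = 0 → 0 < Sv i := fun i h => hω' (.inl ⟨i, h⟩)
      have hpq : ∀ (p : {i : ι // 0 < v i lst}) (q : {i : ι // v i lst < 0}),
          0 < (-(v q.1 lst)) * Sv p.1 + (v p.1 lst) * Sv q.1 := by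
        intro p q
        have h := hω' (.inr (p, q))
        have e : ∑ j : Fin n, ((-(v q.1 lst)) * v p.1 j.castSucc
              + (v p.1 lst) * v q.1 j.castSucc) * ω' j
            = (-(v q.1 lst)) * Sv p.1 + (v p.1 lst) * Sv q.1 := by
          simp only [hSv, Finset.mul_sum, ← Finset.sum_add_distrib]
          exact Finset.sum_congr rfl (fun j _ => by ring)
        rw [e] at h; exact h
      set A : Finset F :=
        Finset.univ.image (fun p : {i : ι // 0 < v i lst} => -Sv p.1 / v p.1 lst) with hA
      set B : Finset F :=
        Finset.univ.image (fun q : {i : ι // v i lst < 0} => -Sv q.1 / v q.1 lst) with hB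
      have hAB : ∀ a ∈ A, ∀ b ∈ B, a < b := by
        intro a ha b hb
        obtain ⟨p, -, rfl⟩ := Finset.mem_image.mp ha
        obtain ⟨q, -, rfl⟩ := Finset.mem_image.mp hb
        have hq' : (0:F) < -(v q.1 lst) := neg_pos.mpr q.2
        have e : -Sv q.1 / v q.1 lst = Sv q.1 / (-(v q.1 lst)) := by
          rw [div_neg, neg_div]
        rw [e, div_lt_div_iff₀ p.2 hq']
        nlinarith [hpq p q]
      obtain ⟨t, htA, htB⟩ := exists_sep A B hAB
      refine Or.inl ⟨Fin.snoc ω' t, fun i => ?_⟩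
      rw [Fin.sum_univ_castSucc]
      simp only [Fin.snoc_castSucc, Fin.snoc_last]
      have hgoal : (∑ j : Fin n, v i j.castSucc * ω' j) = Sv i := rfl
      rw [hgoal]
      rcases lt_trichotomy (v i lst) 0 with h | h | h
      · have hb : -Sv i / v i lst ∈ B := Finset.mem_image.mpr ⟨⟨i, h⟩, Finset.mem_univ _, rfl⟩
        have := htB _ hb
        rw [lt_div_iff_of_neg h] at this
        linarith
      · rw [h]; simpa using hz i h
      · have ha : -Sv i / v i lst ∈ A := Finset.mem_image.mpr ⟨⟨i, h⟩, Finset.mem_univ _, rfl⟩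
        have := htA _ ha
        rw [div_lt_iff₀ h] at this
        linarith
    · -- build certificate c from c'
      set c : ι → F := fun i =>
        (if h : v i lst = 0 then c' (.inl ⟨i, h⟩) else 0)
        + (if h : 0 < v i lst then
            ∑ q : {i : ι // v i lst < 0}, c' (.inr (⟨i, h⟩, q)) * (-(v q.1 lst)) else 0)
        + (if h : v i lst < 0 then
            ∑ p : {i : ι // 0 < v i lst}, c' (.inr (p, ⟨i, h⟩)) * (v p.1 lst) else 0)
        with hc
      have hcnn : ∀ i, 0 ≤ c i := by
        intro i
        refine add_nonneg (add_nonneg ?_ ?_) ?_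
        · split <;> [exact hc'1 _; rfl]
        · split
          · exact Finset.sum_nonneg fun q _ =>
              mul_nonneg (hc'1 _) (le_of_lt (neg_pos.mpr q.2))
          · rfl
        · split
          · exact Finset.sum_nonneg fun p _ => mul_nonneg (hc'1 _) (le_of_lt p.2)
          · rfl
      have hcnz : ∃ i, c i ≠ 0 := by
        cases i₀ with
        | inl z =>
          refine ⟨z.1, ?_⟩
          have : c z.1 = c' (.inl z) := by
            have h0 : v z.1 lst = 0 := z.2
            simp [hc, h0]
          rw [this]; exact hi₀
        | inr pq =>
          obtain ⟨p, q⟩ := pq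
          refine ⟨p.1, ne_of_gt ?_⟩
          have h1 : ¬ (v p.1 lst = 0) := ne_of_gt p.2
          have h3 : ¬ (v p.1 lst < 0) := asymm p.2
          have e : c p.1 = ∑ q' : {i : ι // v i lst < 0},
              c' (.inr (p, q')) * (-(v q'.1 lst)) := by
            simp [hc, h1, h3, dif_pos p.2]
          rw [e]
          refine Finset.sum_pos' (fun q' _ =>
              mul_nonneg (hc'1 _) (le_of_lt (neg_pos.mpr q'.2))) ⟨q, Finset.mem_univ _, ?_⟩
          exact mul_pos (lt_of_le_of_ne (hc'1 _) (Ne.symm hi₀)) (neg_pos.mpr q.2)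
      -- the canonical expansion
      have key : ∀ jj : Fin (n+1), ∑ i, c i * v i jj =
          (∑ z : {i : ι // v i lst = 0}, c' (.inl z) * v z.1 jj)
          + ((∑ x : ({i : ι // 0 < v i lst}) × ({i : ι // v i lst < 0}),
                c' (.inr x) * ((-(v x.2.1 lst)) * v x.1.1 jj))
            + (∑ x : ({i : ι // 0 < v i lst}) × ({i : ι // v i lst < 0}),
                c' (.inr x) * ((v x.1.1 lst) * v x.2.1 jj))) := by
        intro jj
        have expand : ∀ i, c i * v i jj =
            (if h : v i lst = 0 then c' (.inl ⟨i, h⟩) * v i jj else 0)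
            + ((if h : 0 < v i lst then
                ∑ q : {i : ι // v i lst < 0},
                  c' (.inr (⟨i, h⟩, q)) * ((-(v q.1 lst)) * v i jj) else 0)
            + (if h : v i lst < 0 then
                ∑ p : {i : ι // 0 < v i lst},
                  c' (.inr (p, ⟨i, h⟩)) * ((v p.1 lst) * v i jj) else 0)) := by
          intro i
          have push1 : (if h : v i lst = 0 then c' (.inl ⟨i, h⟩) else 0) * v i jj
              = (if h : v i lst = 0 then c' (.inl ⟨i, h⟩) * v i jj else 0) := by
            by_cases h : v i lst = 0
            · rw [dif_pos h, dif_pos h]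
            · rw [dif_neg h, dif_neg h, zero_mul]
          have push2 : (if h : 0 < v i lst then
                ∑ q : {i : ι // v i lst < 0}, c' (.inr (⟨i, h⟩, q)) * (-(v q.1 lst)) else 0)
                  * v i jj
              = (if h : 0 < v i lst then
                ∑ q : {i : ι // v i lst < 0},
                  c' (.inr (⟨i, h⟩, q)) * ((-(v q.1 lst)) * v i jj) else 0) := by
            by_cases h : 0 < v i lst
            · rw [dif_pos h, dif_pos h, Finset.sum_mul]
              exact Finset.sum_congr rfl fun q _ => mul_assoc _ _ _
            · rw [dif_neg h, dif_neg h, zero_mul]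
          have push3 : (if h : v i lst < 0 then
                ∑ p : {i : ι // 0 < v i lst}, c' (.inr (p, ⟨i, h⟩)) * (v p.1 lst) else 0)
                  * v i jj
              = (if h : v i lst < 0 then
                ∑ p : {i : ι // 0 < v i lst},
                  c' (.inr (p, ⟨i, h⟩)) * ((v p.1 lst) * v i jj) else 0) := by
            by_cases h : v i lst < 0
            · rw [dif_pos h, dif_pos h, Finset.sum_mul]
              exact Finset.sum_congr rfl fun p _ => mul_assoc _ _ _
            · rw [dif_neg h, dif_neg h, zero_mul]
          simp only [hc]
          rw [add_mul, add_mul, push1, push2, push3, add_assoc]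
        rw [Finset.sum_congr rfl (fun i _ => expand i), Finset.sum_add_distrib,
          Finset.sum_add_distrib, sum_dite_univ, sum_dite_univ, sum_dite_univ]
        refine congrArg₂ HAdd.hAdd rfl (congrArg₂ HAdd.hAdd ?_ ?_)
        · rw [Fintype.sum_prod_type]
        · rw [Fintype.sum_prod_type, Finset.sum_comm]
      refine Or.inr ⟨c, hcnn, hcnz, fun jj => ?_⟩
      rw [key jj]
      refine Fin.lastCases ?_ ?_ jj
      · -- jj = last
        have e1 : (∑ z : {i : ι // v i lst = 0}, c' (.inl z) * v z.1 lst) = 0 :=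
          Finset.sum_eq_zero fun z _ => by rw [z.2, mul_zero]
        rw [e1, zero_add, ← Finset.sum_add_distrib]
        exact Finset.sum_eq_zero fun x _ => by ring
      · -- jj = castSucc j
        intro j
        have h := hc'3 j
        rw [Fintype.sum_sum_type] at h
        have e2 : ∀ x : ({i : ι // 0 < v i lst}) × ({i : ι // v i lst < 0}),
            c' (.inr x) * ((-(v x.2.1 lst)) * v x.1.1 j.castSucc
              + (v x.1.1 lst) * v x.2.1 j.castSucc)
            = c' (.inr x) * ((-(v x.2.1 lst)) * v x.1.1 j.castSucc)
              + c' (.inr x) * ((v x.1.1 lst) * v x.2.1 j.castSucc) := fun x => by ring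
        rw [← Finset.sum_add_distrib]
        calc (∑ z : {i : ι // v i lst = 0}, c' (.inl z) * v z.1 j.castSucc)
            + ∑ x : ({i : ι // 0 < v i lst}) × ({i : ι // v i lst < 0}),
                (c' (.inr x) * ((-(v x.2.1 lst)) * v x.1.1 j.castSucc)
                  + c' (.inr x) * ((v x.1.1 lst) * v x.2.1 j.castSucc))
            = (∑ z : {i : ι // v i lst = 0}, c' (.inl z) * v z.1 j.castSucc)
            + ∑ x : ({i : ι // 0 < v i lst}) × ({i : ι // v i lst < 0}),
                c' (.inr x) * ((-(v x.2.1 lst)) * v x.1.1 j.castSucc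
                  + (v x.1.1 lst) * v x.2.1 j.castSucc) := by
              rw [Finset.sum_congr rfl (fun x _ => (e2 x).symm)]
          _ = 0 := h

section OrderHelpers

variable {M : Type*} [AddCommMonoid M] (lt : M → M → Prop)
  (htrans : ∀ α β γ, lt α β → lt β γ → lt α γ)
  (hadd : ∀ α β γ, lt α β → lt (α + γ) (β + γ))

/-- weak order: a ⪯ b -/
def wkle (a b : M) : Prop := a = b ∨ lt a b

include htrans hadd

lemma lt_add_wk {a b c d : M} (h1 : lt a b) (h2 : wkle lt c d) :
    lt (a + c) (b + d) := by
  rcases h2 with rfl | h2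
  · exact hadd a b c h1
  · have h3 := hadd a b c h1
    have h4 := hadd c d b h2
    rw [add_comm c b, add_comm d b] at h4
    exact htrans _ _ _ h3 h4

lemma wk_add_wk {a b c d : M} (h1 : wkle lt a b) (h2 : wkle lt c d) :
    wkle lt (a + c) (b + d) := by
  rcases h1 with rfl | h1
  · rcases h2 with rfl | h2
    · exact Or.inl rfl
    · refine Or.inr ?_
      have := hadd c d a h2
      rwa [add_comm c a, add_comm d a] at this
  · exact Or.inr (lt_add_wk lt htrans hadd h1 h2)

lemma smul_wk {a b : M} (h : wkle lt a b) : ∀ m : ℕ, wkle lt (m • a) (m • b) := by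
  intro m
  induction m with
  | zero => simp [wkle]
  | succ m ih =>
    rw [succ_nsmul, succ_nsmul]
    exact wk_add_wk lt htrans hadd ih h

lemma smul_lt {a b : M} (h : lt a b) {m : ℕ} (hm : m ≠ 0) : lt (m • a) (m • b) := by
  obtain ⟨k, rfl⟩ := Nat.exists_eq_succ_of_ne_zero hm
  rw [succ_nsmul, succ_nsmul, add_comm (k • a) a, add_comm (k • b) b]
  exact lt_add_wk lt htrans hadd h (smul_wk lt htrans hadd (Or.inr h) k)

lemma sum_wk {ι : Type*} (s : Finset ι) (f g : ι → M)
    (h : ∀ p ∈ s, wkle lt (f p) (g p)) : wkle lt (∑ p ∈ s, f p) (∑ p ∈ s, g p) := by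
  classical
  induction s using Finset.induction_on with
  | empty => simp [wkle]
  | insert x s' hx ih =>
    rw [Finset.sum_insert hx, Finset.sum_insert hx]
    exact wk_add_wk lt htrans hadd (h x (Finset.mem_insert_self x s'))
      (ih fun p hp => h p (Finset.mem_insert_of_mem hp))

end OrderHelpers

-- scaling rationals to naturals
lemma nat_scale {ι : Type*} [Fintype ι] (c : ι → ℚ) (hc : ∀ i, 0 ≤ c i) :
    ∃ (k : ℕ) (m : ι → ℕ), 0 < k ∧ ∀ i, (m i : ℚ) = c i * k := by
  classical
  refine ⟨∏ i, (c i).den, fun i => (c i).num.toNat * ((∏ i, (c i).den) / (c i).den),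
    Finset.prod_pos fun i _ => (c i).pos, fun i => ?_⟩
  obtain ⟨r, hr⟩ := Finset.dvd_prod_of_mem (fun i => (c i).den) (Finset.mem_univ i)
  have hden : ((c i).den : ℚ) ≠ 0 := Nat.cast_ne_zero.mpr (c i).den_nz
  have hdiv : (∏ i, (c i).den) / (c i).den = r := by
    rw [hr]; exact Nat.mul_div_cancel_left r (c i).pos
  have hnum : (((c i).num.toNat : ℕ) : ℚ) = ((c i).num : ℚ) := by
    exact_mod_cast congrArg (Int.cast : ℤ → ℚ)
      (Int.toNat_of_nonneg (Rat.num_nonneg.mpr (hc i)))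
  dsimp only
  rw [hdiv]
  push_cast
  rw [hnum]
  calc ((c i).num : ℚ) * r = (((c i).num : ℚ) / (c i).den) * ((c i).den * r) := by
        field_simp
    _ = c i * (∏ i, ((c i).den : ℚ)) := by
        have hcast : (∏ i, ((c i).den : ℚ)) = ((c i).den : ℚ) * r := by
          exact_mod_cast congrArg (Nat.cast : ℕ → ℚ) hr
        rw [Rat.num_div_den, hcast]

open MvPolynomial

theorem exists_nonneg_rational_weight_for_finite_set
    {K : Type*} [Field K] {n : ℕ}
    (lt : (Fin n →₀ ℕ) → (Fin n →₀ ℕ) → Prop)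
    (hirr : ∀ α, ¬ lt α α)
    (htrans : ∀ α β γ, lt α β → lt β γ → lt α γ)
    (htotal : ∀ α β, α ≠ β → lt α β ∨ lt β α)
    (hadd : ∀ α β γ, lt α β → lt (α + γ) (β + γ))
    (hzero : ∀ α, α ≠ 0 → lt 0 α)
    (F : Finset (MvPolynomial (Fin n) K)) (hF : ∀ f ∈ F, f ≠ 0) :
    ∃ ω : Fin n → ℚ, (∀ i, 0 ≤ ω i) ∧
      ∀ f ∈ F, ∀ α ∈ f.support,
        (∀ β ∈ f.support, β ≠ α → lt β α) →
        ∀ β ∈ f.support, β ≠ α →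
          (∑ i, ω i * (β i : ℚ)) < ∑ i, ω i * (α i : ℚ) := by
  classical
  let P : Finset ((Fin n →₀ ℕ) × (Fin n →₀ ℕ)) :=
    F.biUnion fun f => (f.support ×ˢ f.support).filter fun q => lt q.2 q.1
  have hPmem : ∀ q ∈ P, lt q.2 q.1 := by
    intro q hq
    obtain ⟨f, _, hq'⟩ := Finset.mem_biUnion.mp hq
    exact (Finset.mem_filter.mp hq').2
  let v : (↥P ⊕ Fin n) → Fin n → ℚ := fun x => match x with
    | .inl p => fun j => (p.1.1 j : ℚ) - (p.1.2 j : ℚ)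
    | .inr i => fun j => if i = j then 1 else 0
  rcases gordan n (↥P ⊕ Fin n) v with ⟨ω, hω⟩ | ⟨c, hc1, hc2, hc3⟩
  · refine ⟨ω, fun i => ?_, ?_⟩
    · have h := hω (.inr i)
      have e : ∑ j, v (.inr i) j * ω j = ω i := by
        simp [v, ite_mul, Finset.sum_ite_eq]
      rw [e] at h
      exact le_of_lt h
    · intro f hf α hα hmax β hβ hne
      have hlt : lt β α := hmax β hβ hne
      have hP : (α, β) ∈ P := Finset.mem_biUnion.mpr
        ⟨f, hf, Finset.mem_filter.mpr ⟨Finset.mem_product.mpr ⟨hα, hβ⟩, hlt⟩⟩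
      have h := hω (.inl ⟨(α, β), hP⟩)
      have e : ∑ j, v (.inl ⟨(α, β), hP⟩) j * ω j
          = (∑ j, ω j * (α j : ℚ)) - ∑ j, ω j * (β j : ℚ) := by
        rw [← Finset.sum_sub_distrib]
        refine Finset.sum_congr rfl fun j _ => ?_
        show ((α j : ℚ) - (β j : ℚ)) * ω j = _
        ring
      rw [e] at h
      linarith
  · exfalso
    obtain ⟨k, m, hk, hm⟩ := nat_scale (fun p : ↥P => c (.inl p)) (fun p => hc1 _)
    have coord : ∀ j : Fin n,
        (∑ p : ↥P, c (.inl p) * ((p.1.1 j : ℚ) - (p.1.2 j : ℚ))) + c (.inr j) = 0 := by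
      intro j
      have h := hc3 j
      rw [Fintype.sum_sum_type] at h
      have e2 : ∑ i : Fin n, c (.inr i) * v (.inr i) j = c (.inr j) := by
        simp [v, mul_ite, mul_one, mul_zero, Finset.sum_ite_eq']
      rw [e2] at h
      exact h
    have hcoord : ∀ j : Fin n,
        (∑ p : ↥P, m p * (p.1.1 j)) ≤ ∑ p : ↥P, m p * (p.1.2 j) := by
      intro j
      have h := coord j
      have hle : ∑ p : ↥P, c (.inl p) * ((p.1.1 j : ℚ) - (p.1.2 j : ℚ)) ≤ 0 := by
        have := hc1 (.inr j); linarith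
      have hk' : (0:ℚ) < k := by exact_mod_cast hk
      have h2 : ∑ p : ↥P, (m p : ℚ) * ((p.1.1 j : ℚ) - (p.1.2 j : ℚ)) ≤ 0 := by
        have eq1 : ∑ p : ↥P, (m p : ℚ) * ((p.1.1 j : ℚ) - (p.1.2 j : ℚ))
            = (∑ p : ↥P, c (.inl p) * ((p.1.1 j : ℚ) - (p.1.2 j : ℚ))) * k := by
          rw [Finset.sum_mul]
          exact Finset.sum_congr rfl fun p _ => by rw [hm p]; ring
        rw [eq1]
        nlinarith [hle, hk']
      have h3 : (∑ p : ↥P, (m p : ℚ) * (p.1.1 j : ℚ))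
          ≤ ∑ p : ↥P, (m p : ℚ) * (p.1.2 j : ℚ) := by
        rw [← sub_nonpos, ← Finset.sum_sub_distrib]
        calc ∑ p : ↥P, ((m p : ℚ) * (p.1.1 j : ℚ) - (m p : ℚ) * (p.1.2 j : ℚ))
            = ∑ p : ↥P, (m p : ℚ) * ((p.1.1 j : ℚ) - (p.1.2 j : ℚ)) :=
              Finset.sum_congr rfl fun p _ => by ring
          _ ≤ 0 := h2
      exact_mod_cast h3
    by_cases hall : ∀ p : ↥P, c (.inl p) = 0
    · obtain ⟨i₀, hi₀⟩ := hc2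
      have hz : ∀ j, c (.inr j) = 0 := by
        intro j
        have h := coord j
        rw [Finset.sum_eq_zero (fun p _ => by rw [hall p, zero_mul])] at h
        linarith
      cases i₀ with
      | inl p => exact hi₀ (hall p)
      | inr j => exact hi₀ (hz j)
    · push_neg at hall
      obtain ⟨p0, hp0⟩ := hall
      have hmp0 : m p0 ≠ 0 := by
        intro h0
        have h1 := hm p0
        rw [h0] at h1
        have hk' : (0:ℚ) < k := by exact_mod_cast hk
        have hcp : 0 < c (.inl p0) := lt_of_le_of_ne (hc1 _) (Ne.symm hp0)
        push_cast at h1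
        nlinarith [mul_pos hcp hk', h1]
      set A : Fin n →₀ ℕ := ∑ p : ↥P, m p • p.1.1 with hA
      set B : Fin n →₀ ℕ := ∑ p : ↥P, m p • p.1.2 with hB
      have hABj : ∀ j, A j ≤ B j := by
        intro j
        have eA : A j = ∑ p : ↥P, m p * (p.1.1 j) := by
          rw [hA, Finsupp.finset_sum_apply]
          exact Finset.sum_congr rfl fun p _ => by rw [Finsupp.smul_apply, smul_eq_mul]
        have eB : B j = ∑ p : ↥P, m p * (p.1.2 j) := by
          rw [hB, Finsupp.finset_sum_apply]
          exact Finset.sum_congr rfl fun p _ => by rw [Finsupp.smul_apply, smul_eq_mul]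
        rw [eA, eB]
        exact hcoord j
      have hstrict : lt B A := by
        rw [hA, hB, ← Finset.add_sum_erase _ _ (Finset.mem_univ p0),
          ← Finset.add_sum_erase _ _ (Finset.mem_univ p0)]
        refine lt_add_wk lt htrans hadd ?_ ?_
        · exact smul_lt lt htrans hadd (hPmem p0.1 p0.2) hmp0
        · exact sum_wk lt htrans hadd _ _ _
            fun p _ => smul_wk lt htrans hadd (Or.inr (hPmem p.1 p.2)) (m p)
      set δ : Fin n →₀ ℕ := B - A with hδ
      have hBA : B = A + δ := by
        ext j
        rw [Finsupp.add_apply, hδ, Finsupp.tsub_apply]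
        exact (Nat.add_sub_cancel' (hABj j)).symm
      by_cases hd : δ = 0
      · rw [hd, add_zero] at hBA
        exact hirr A (hBA ▸ hstrict)
      · have h1 : lt A B := by
          have h2 := hadd 0 δ A (hzero δ hd)
          rwa [zero_add, add_comm δ A, ← hBA] at h2
        exact hirr A (htrans A B A h1 hstrict)
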